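/- Let G be a group and c a left-invariant circular ordering of G. Then the semiconjugacy class S_c = {d ∈ CO(G) : rot_d(g) = rot_c(g) and τ_d(g,h) = τ_c(g,h) for all g,h ∈ G} is a compact subset of CO(G), and it is invariant under the right conjugation action of G on CO(G): for every d ∈ S_c and g ∈ G, the circular ordering d·g defined by (d·g)(g₁,g₂,g₃) = d(g₁g⁻¹, g₂g⁻¹, g₃g⁻¹) also lies in S_c. -/

import Mathlib

namespace Paper

variable {G : Type*} [Group G]

/-- A left-invariant circular ordering of a group `G`, as a function `G³ → {0, ±1} ⊆ ℤ`. -/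
def IsCircOrd (c : G → G → G → ℤ) : Prop :=
  (∀ g₁ g₂ g₃ : G, c g₁ g₂ g₃ = 0 ↔ (g₁ = g₂ ∨ g₁ = g₃ ∨ g₂ = g₃)) ∧
  (∀ g₁ g₂ g₃ : G, c g₁ g₂ g₃ = 0 ∨ c g₁ g₂ g₃ = 1 ∨ c g₁ g₂ g₃ = -1) ∧
  (∀ g₁ g₂ g₃ g₄ : G, c g₂ g₃ g₄ - c g₁ g₃ g₄ + c g₁ g₂ g₄ - c g₁ g₂ g₃ = 0) ∧
  (∀ g g₁ g₂ g₃ : G, c (g*g₁) (g*g₂) (g*g₃) = c g₁ g₂ g₃)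

/-- The space CO(G) of circular orderings, topologized as a subspace of `ℤ^{G³}`
(all relevant values lie in the discrete set `{0,±1}`, and `ℤ` carries the discrete
topology, so this is the subspace topology from the product topology on `{0,±1}^{G³}`). -/
abbrev CircOrd (G : Type*) [Group G] := {c : G → G → G → ℤ // IsCircOrd c}

open Classical in
/-- The cocycle `f_c`: `f_c(g,h) = 0` if `g = 1` or `h = 1` or `c(1,g,gh) = 1`,
and `f_c(g,h) = 1` otherwise (i.e. when `gh = 1 ≠ g`, or `c(1,gh,g) = 1`). -/
noncomputable def fc (c : G → G → G → ℤ) (g h : G) : ℤ :=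
  if g = 1 ∨ h = 1 ∨ c 1 g (g*h) = 1 then 0 else 1

/-- Multiplication in the central extension `G̃_c = G × ℤ`:
`(g,n)(h,m) = (gh, n+m+f_c(g,h))`. -/
noncomputable def liftMul (c : G → G → G → ℤ) (x y : G × ℤ) : G × ℤ :=
  (x.1 * y.1, x.2 + y.2 + fc c x.1 y.1)

/-- Powers (with natural number exponents) in `G̃_c`. -/
noncomputable def liftPow (c : G → G → G → ℤ) (x : G × ℤ) : ℕ → G × ℤ
  | 0 => (1, 0)
  | n+1 => liftMul c (liftPow c x n) x

/-- `[h]_c`: the unique integer `k` with `z_c^k ≤_c h <_c z_c^{k+1}`, where `<_c` is the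
left-ordering of `G̃_c` with positive cone `{(g,n) : n ≥ 0} ∖ {(1,0)}` and `z_c = (1,1)`.
Since `z_c^k = (1,k)` and `f_c(g,g⁻¹) = 1` for `g ≠ 1`, this is exactly the second
coordinate of `h`. -/
def liftFloor (h : G × ℤ) : ℤ := h.2

/-- The translation number `r̃ot_c(h)` of `h ∈ G̃_c`: the limit of `[hⁿ]_c / n`
(`limUnder` picks out the limit when it exists). -/
noncomputable def rotTilde (c : G → G → G → ℤ) (h : G × ℤ) : ℝ :=
  Filter.limUnder Filter.atTop (fun n : ℕ => (liftFloor (liftPow c h n) : ℝ) / (n : ℝ))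

/-- The rotation number `rot_c(g) ∈ ℝ/ℤ`, computed using the lift `(g,0) ∈ G̃_c`
(it is independent of the choice of lift). -/
noncomputable def rotc (c : G → G → G → ℤ) (g : G) : AddCircle (1:ℝ) :=
  ((rotTilde c (g, 0) : ℝ) : AddCircle (1:ℝ))

/-- `τ_c(g,h) = r̃ot_c(g̃h̃) − r̃ot_c(g̃) − r̃ot_c(h̃)`, computed using the lifts `(g,0)`
and `(h,0)` (it is independent of the choice of lifts). -/
noncomputable def tauc (c : G → G → G → ℤ) (g h : G) : ℝ :=
  rotTilde c (liftMul c (g,0) (h,0)) - rotTilde c (g,0) - rotTilde c (h,0)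

/-- A positive cone of a group `G`: `P · P ⊆ P` and `P ∪ P⁻¹ = G ∖ {1}`.
It determines a left-ordering by `g < h` iff `g⁻¹h ∈ P`. -/
def IsPositiveCone (P : Set G) : Prop :=
  (∀ a ∈ P, ∀ b ∈ P, a * b ∈ P) ∧ (P ∪ P⁻¹ = {g : G | g ≠ 1})

/-- The left-ordering determined by a positive cone. -/
def coneLt (P : Set G) (a b : G) : Prop := a⁻¹ * b ∈ P

open Classical in
/-- The secret left-ordering `c_<` determined by a positive cone `P`:
`c_<(a,b,c) = sign σ` where `σ` is the permutation sorting `(a,b,c)` into increasing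
order, i.e. `c_< = 1` on positively cyclically ordered triples, `-1` on negatively
cyclically ordered triples, and `0` when the entries are not all distinct. -/
noncomputable def circOfCone (P : Set G) : G → G → G → ℤ := fun a b c =>
  if (coneLt P a b ∧ coneLt P b c) ∨ (coneLt P b c ∧ coneLt P c a) ∨
      (coneLt P c a ∧ coneLt P a b) then 1
  else if (coneLt P c b ∧ coneLt P b a) ∨ (coneLt P b a ∧ coneLt P a c) ∨
      (coneLt P a c ∧ coneLt P c b) then -1
  else 0

/-- A circular ordering is a *secret left-ordering* if it is `c_<` for some
left-ordering `<` of `G`. -/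
def IsSecret (c : G → G → G → ℤ) : Prop := ∃ P : Set G, IsPositiveCone P ∧ c = circOfCone P


section Aux

variable {c : G → G → G → ℤ}

open Classical in
theorem fourPoint {α : Type*} (p0 p1 p2 p3 : α) (x1 x2 x3 x4 : ℤ)
    (hx1 : x1 = 0 ↔ (p0 = p1 ∨ p0 = p2 ∨ p1 = p2))
    (hx2 : x2 = 0 ↔ (p0 = p1 ∨ p0 = p3 ∨ p1 = p3))
    (hx3 : x3 = 0 ↔ (p0 = p2 ∨ p0 = p3 ∨ p2 = p3))
    (hx4 : x4 = 0 ↔ (p1 = p2 ∨ p1 = p3 ∨ p2 = p3))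
    (hv1 : x1 = 0 ∨ x1 = 1 ∨ x1 = -1) (hv2 : x2 = 0 ∨ x2 = 1 ∨ x2 = -1)
    (hv3 : x3 = 0 ∨ x3 = 1 ∨ x3 = -1) (hv4 : x4 = 0 ∨ x4 = 1 ∨ x4 = -1)
    (hrel : x4 - x3 + x2 - x1 = 0) :
    (if p0 = p1 ∨ p1 = p2 ∨ x1 = 1 then (0:ℤ) else 1) +
      (if p0 = p2 ∨ p2 = p3 ∨ x3 = 1 then (0:ℤ) else 1) =
    (if p1 = p2 ∨ p2 = p3 ∨ x4 = 1 then (0:ℤ) else 1) +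
      (if p0 = p1 ∨ p1 = p3 ∨ x2 = 1 then (0:ℤ) else 1) := by
  by_cases h1 : p0 = p1 <;> by_cases h2 : p0 = p2 <;> by_cases h3 : p0 = p3 <;>
    by_cases h4 : p1 = p2 <;> by_cases h5 : p1 = p3 <;> by_cases h6 : p2 = p3 <;>
    subst_vars <;> simp_all <;> split_ifs <;> omega

variable {c : G → G → G → ℤ}

theorem z_eq_iff (x y z : G) : (z = 1) ↔ (x*y = x*(y*z)) := by
  rw [← mul_assoc]; exact left_eq_mul.symm

theorem fc_cocycle (hc : IsCircOrd c) (x y z : G) :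
    fc c x y + fc c (x*y) z = fc c y z + fc c x (y*z) := by
  classical
  have key := fourPoint (1:G) x (x*y) (x*(y*z))
    (c 1 x (x*y)) (c 1 x (x*(y*z))) (c 1 (x*y) (x*(y*z))) (c x (x*y) (x*(y*z)))
    (hc.1 _ _ _) (hc.1 _ _ _) (hc.1 _ _ _) (hc.1 _ _ _)
    (hc.2.1 _ _ _) (hc.2.1 _ _ _) (hc.2.1 _ _ _) (hc.2.1 _ _ _)
    (hc.2.2.1 1 x (x*y) (x*(y*z)))
  have e1 : fc c x y = (if (1:G) = x ∨ x = x*y ∨ c 1 x (x*y) = 1 then (0:ℤ) else 1) := by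
    simp only [fc]
    exact if_congr (or_congr eq_comm (or_congr left_eq_mul.symm Iff.rfl)) rfl rfl
  have e2 : fc c (x*y) z
      = (if (1:G) = x*y ∨ x*y = x*(y*z) ∨ c 1 (x*y) (x*(y*z)) = 1 then (0:ℤ) else 1) := by
    simp only [fc]
    refine if_congr (or_congr eq_comm (or_congr (z_eq_iff x y z) ?_)) rfl rfl
    rw [mul_assoc]
  have e3 : fc c y z
      = (if x = x*y ∨ x*y = x*(y*z) ∨ c x (x*y) (x*(y*z)) = 1 then (0:ℤ) else 1) := by
    have hlg : c 1 y (y*z) = c x (x*y) (x*(y*z)) := by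
      have := hc.2.2.2 x 1 y (y*z); rw [mul_one] at this; exact this.symm
    simp only [fc, hlg]
    exact if_congr (or_congr left_eq_mul.symm
      (or_congr (z_eq_iff x y z) Iff.rfl)) rfl rfl
  have e4 : fc c x (y*z)
      = (if (1:G) = x ∨ x = x*(y*z) ∨ c 1 x (x*(y*z)) = 1 then (0:ℤ) else 1) := by
    simp only [fc]
    exact if_congr (or_congr eq_comm (or_congr left_eq_mul.symm Iff.rfl)) rfl rfl
  rw [e1, e2, e3, e4]
  exact key


theorem fc_nonneg (g h : G) : 0 ≤ fc c g h := by unfold fc; split <;> norm_num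

theorem fc_le_one (g h : G) : fc c g h ≤ 1 := by unfold fc; split <;> norm_num

theorem fc_one_left (h : G) : fc c 1 h = 0 := by simp [fc]

theorem fc_one_right (g : G) : fc c g 1 = 0 := by simp [fc]

open Classical in
theorem fc_inv (hc : IsCircOrd c) (g : G) : fc c g g⁻¹ = if g = 1 then 0 else 1 := by
  by_cases hg : g = 1
  · simp [fc, hg]
  · have h0 : c 1 g 1 = 0 := (hc.1 _ _ _).2 (Or.inr (Or.inl rfl))
    simp [fc, hg, inv_eq_one, mul_inv_cancel, h0]

theorem fc_inv_symm (hc : IsCircOrd c) (g : G) : fc c g⁻¹ g = fc c g g⁻¹ := by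
  have h := fc_inv hc g⁻¹
  rw [inv_inv] at h
  rw [h, fc_inv hc g, inv_eq_one]

/-- inverse in the lifted group -/
noncomputable def liftInv (c : G → G → G → ℤ) (x : G × ℤ) : G × ℤ :=
  (x.1⁻¹, -x.2 - fc c x.1 x.1⁻¹)

theorem liftMul_assoc (hc : IsCircOrd c) (x y z : G × ℤ) :
    liftMul c (liftMul c x y) z = liftMul c x (liftMul c y z) := by
  refine Prod.ext (mul_assoc _ _ _) ?_
  show x.2 + y.2 + fc c x.1 y.1 + z.2 + fc c (x.1 * y.1) z.1
      = x.2 + (y.2 + z.2 + fc c y.1 z.1) + fc c x.1 (y.1 * z.1)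
  have := fc_cocycle hc x.1 y.1 z.1
  omega

theorem liftMul_one' (x : G × ℤ) : liftMul c x (1, 0) = x := by
  simp [liftMul, fc_one_right]

theorem liftOne_mul' (x : G × ℤ) : liftMul c (1, 0) x = x := by
  simp [liftMul, fc_one_left]

theorem liftInv_mul (hc : IsCircOrd c) (x : G × ℤ) : liftMul c (liftInv c x) x = (1, 0) := by
  refine Prod.ext (by simp [liftMul, liftInv]) ?_
  simp only [liftMul, liftInv, fc_inv_symm hc]
  ring

/-- The lifted group `G̃_c`, as a type synonym for `G × ℤ`. -/
def Lt {G : Type*} [Group G] {c : G → G → G → ℤ} (_hc : IsCircOrd c) : Type _ := G × ℤ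

noncomputable instance ltGroup {c : G → G → G → ℤ} {hc : IsCircOrd c} : Group (Lt hc) where
  mul := liftMul c
  one := ((1 : G), (0 : ℤ))
  inv := liftInv c
  mul_assoc := liftMul_assoc hc
  one_mul := liftOne_mul'
  mul_one := liftMul_one'
  inv_mul_cancel := liftInv_mul hc

theorem lt_mul_def {hc : IsCircOrd c} (x y : Lt hc) : x * y = liftMul c x y := rfl
theorem lt_one_def {hc : IsCircOrd c} : (1 : Lt hc) = ((1:G), (0:ℤ)) := rfl

theorem liftPow_eq_pow (hc : IsCircOrd c) (x : Lt hc) (n : ℕ) :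
    liftPow c x n = x ^ n := by
  induction n with
  | zero => rw [pow_zero]; rfl
  | succ n ih =>
    rw [pow_succ, ← ih]
    rfl

theorem liftPow_fst (x : G × ℤ) (n : ℕ) : (liftPow c x n).1 = x.1 ^ n := by
  induction n with
  | zero => simp [liftPow]
  | succ n ih => simp [liftPow, liftMul, ih, pow_succ]

theorem liftPow_add (hc : IsCircOrd c) (x : G × ℤ) (n m : ℕ) :
    liftPow c x (n + m) = liftMul c (liftPow c x n) (liftPow c x m) := by
  have := liftPow_eq_pow hc (show Lt hc from x)
  rw [this, this, this, pow_add]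
  rfl

theorem liftPow_snd_shift (x : G × ℤ) (k : ℤ) (n : ℕ) :
    liftPow c (x.1, x.2 + k) n = ((liftPow c x n).1, (liftPow c x n).2 + n * k) := by
  induction n with
  | zero => simp [liftPow]
  | succ n ih =>
    simp only [liftPow, ih, liftMul, liftPow_fst]
    refine Prod.ext rfl ?_
    push_cast; ring

theorem liftPow_conj (hc : IsCircOrd c) (t x : Lt hc) (n : ℕ) :
    liftPow c (t * x * t⁻¹) n = t * (show Lt hc from liftPow c x n) * t⁻¹ := by
  rw [liftPow_eq_pow hc (t * x * t⁻¹) n]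
  rw [show (show Lt hc from liftPow c x n) = x ^ n from liftPow_eq_pow hc x n]
  exact @conj_pow (Lt hc) _ n t x


open Filter Topology

theorem liftPow_snd_add (hc : IsCircOrd c) (x : G × ℤ) (n m : ℕ) :
    (liftPow c x (n + m)).2
      = (liftPow c x n).2 + (liftPow c x m).2 + fc c (x.1 ^ n) (x.1 ^ m) := by
  rw [liftPow_add hc, liftMul, liftPow_fst, liftPow_fst]

theorem liftPow_snd_zero (x : G × ℤ) : (liftPow c x 0).2 = 0 := rfl

/-- Fekete-type convergence for the translation number. -/
theorem rotTilde_tendsto (hc : IsCircOrd c) (x : G × ℤ) :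
    Tendsto (fun n : ℕ => ((liftPow c x n).2 : ℝ) / (n : ℝ)) atTop (𝓝 (rotTilde c x)) := by
  set u : ℕ → ℝ := fun n => ((liftPow c x n).2 : ℝ) with hu
  have hadd : ∀ n m : ℕ, u (n + m) = u n + u m + (fc c (x.1 ^ n) (x.1 ^ m) : ℝ) := by
    intro n m; simp only [hu]
    rw [liftPow_snd_add hc]; push_cast; ring
  have hfle : ∀ g h : G, (fc c g h : ℝ) ≤ 1 := fun g h => by exact_mod_cast fc_le_one g h
  have hf0 : ∀ g h : G, (0:ℝ) ≤ (fc c g h : ℝ) := fun g h => by exact_mod_cast fc_nonneg g h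
  have hsub : Subadditive (fun n => u n + 1) := by
    intro n m
    show u (n + m) + 1 ≤ (u n + 1) + (u m + 1)
    rw [hadd]
    have := hfle (x.1 ^ n) (x.1 ^ m)
    linarith
  have hmono : ∀ n : ℕ, (n : ℝ) * u 1 ≤ u n := by
    intro n
    induction n with
    | zero => simp [hu, liftPow_snd_zero]
    | succ n ih =>
      have h := hadd n 1
      have := hf0 (x.1 ^ n) (x.1 ^ 1)
      push_cast
      push_cast at ih
      linarith
  have hbdd : BddBelow (Set.range fun n : ℕ => (u n + 1) / (n : ℝ)) := by
    refine ⟨min 0 (u 1), ?_⟩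
    rintro - ⟨n, rfl⟩
    rcases Nat.eq_zero_or_pos n with rfl | hn
    · simp [hu, liftPow_snd_zero]
    · have hn' : (0:ℝ) < n := by exact_mod_cast hn
      have : u 1 ≤ (u n + 1) / n := by
        rw [le_div_iff₀ hn']
        have := hmono n
        nlinarith
      exact le_trans (min_le_right _ _) this
  have hlim := hsub.tendsto_lim hbdd
  have h2 : Tendsto (fun n : ℕ => u n / (n : ℝ)) atTop (𝓝 hsub.lim) := by
    have := hlim.sub tendsto_one_div_atTop_nhds_zero_nat
    rw [sub_zero] at this
    refine this.congr fun n => ?_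
    rw [div_sub_div_same]; ring_nf
  have : rotTilde c x = hsub.lim := by unfold rotTilde liftFloor; exact h2.limUnder_eq
  rw [this]; exact h2

theorem rotTilde_eq_of_tendsto (hc : IsCircOrd c) {x : G × ℤ} {L : ℝ}
    (h : Tendsto (fun n : ℕ => ((liftPow c x n).2 : ℝ) / (n : ℝ)) atTop (𝓝 L)) :
    rotTilde c x = L :=
  tendsto_nhds_unique (rotTilde_tendsto hc x) h

/-- two-sided bound: `u n / n ≤ r̃ot ≤ (u n + 1) / n`. -/
theorem rotTilde_bounds (hc : IsCircOrd c) (x : G × ℤ) {n : ℕ} (hn : 1 ≤ n) :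
    ((liftPow c x n).2 : ℝ) / (n : ℝ) ≤ rotTilde c x ∧
      rotTilde c x ≤ (((liftPow c x n).2 : ℝ) + 1) / (n : ℝ) := by
  set u : ℕ → ℝ := fun m => ((liftPow c x m).2 : ℝ) with hu
  have hadd : ∀ p q : ℕ, u (p + q) = u p + u q + (fc c (x.1 ^ p) (x.1 ^ q) : ℝ) := by
    intro p q; simp only [hu]
    rw [liftPow_snd_add hc]; push_cast; ring
  have hfle : ∀ g h : G, (fc c g h : ℝ) ≤ 1 := fun g h => by exact_mod_cast fc_le_one g h
  have hf0 : ∀ g h : G, (0:ℝ) ≤ (fc c g h : ℝ) := fun g h => by exact_mod_cast fc_nonneg g h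
  have hnR : (0:ℝ) < (n:ℝ) := by exact_mod_cast hn
  -- bounds on u (n*k)
  have hlow : ∀ k : ℕ, (k : ℝ) * u n ≤ u (n * k) := by
    intro k
    induction k with
    | zero => simp [hu, liftPow_snd_zero]
    | succ k ih =>
      have h1 : u (n * k + n) = u (n * k) + u n + (fc c (x.1 ^ (n*k)) (x.1 ^ n) : ℝ) :=
        hadd (n*k) n
      have h2 := hf0 (x.1 ^ (n*k)) (x.1 ^ n)
      have : n * (k + 1) = n * k + n := by ring
      rw [this]
      push_cast
      linarith
  have hhigh : ∀ k : ℕ, u (n * k) ≤ (k : ℝ) * (u n + 1) := by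
    intro k
    induction k with
    | zero => simp [hu, liftPow_snd_zero]
    | succ k ih =>
      have h1 : u (n * k + n) = u (n * k) + u n + (fc c (x.1 ^ (n*k)) (x.1 ^ n) : ℝ) :=
        hadd (n*k) n
      have h2 := hfle (x.1 ^ (n*k)) (x.1 ^ n)
      have : n * (k + 1) = n * k + n := by ring
      rw [this]
      push_cast
      linarith
  -- subsequence tendsto
  have hmulT : Tendsto (fun k : ℕ => n * k) atTop atTop := by
    refine tendsto_atTop_mono (fun k => ?_) tendsto_id
    exact Nat.le_mul_of_pos_left k hn
  have hsubseq : Tendsto (fun k : ℕ => u (n * k) / ((n * k : ℕ) : ℝ)) atTop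
      (𝓝 (rotTilde c x)) := (rotTilde_tendsto hc x).comp hmulT
  constructor
  · refine ge_of_tendsto hsubseq ?_
    filter_upwards [eventually_ge_atTop 1] with k hk
    have hkR : (0:ℝ) < (k:ℝ) := by exact_mod_cast hk
    have hnk : (0:ℝ) < ((n * k : ℕ) : ℝ) := by positivity
    show ((liftPow c x n).2 : ℝ) / (n:ℝ) ≤ u (n * k) / ((n*k : ℕ):ℝ)
    rw [div_le_div_iff₀ hnR hnk]
    have := hlow k
    push_cast
    nlinarith [hlow k]
  · refine le_of_tendsto hsubseq ?_
    filter_upwards [eventually_ge_atTop 1] with k hk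
    have hkR : (0:ℝ) < (k:ℝ) := by exact_mod_cast hk
    have hnk : (0:ℝ) < ((n * k : ℕ) : ℝ) := by positivity
    rw [div_le_div_iff₀ hnk hnR]
    push_cast
    nlinarith [hhigh k]

theorem rotTilde_shift (hc : IsCircOrd c) (a : G) (z k : ℤ) :
    rotTilde c (a, z + k) = rotTilde c (a, z) + k := by
  refine rotTilde_eq_of_tendsto hc ?_
  have h1 : ∀ n : ℕ, liftPow c ((a, z + k) : G × ℤ) n
      = ((liftPow c ((a, z) : G × ℤ) n).1, (liftPow c ((a, z) : G × ℤ) n).2 + n * k) :=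
    fun n => liftPow_snd_shift ((a, z) : G × ℤ) k n
  have h2 := (rotTilde_tendsto hc ((a, z) : G × ℤ)).add (tendsto_const_nhds (x := (k:ℝ)))
  refine h2.congr' ?_
  filter_upwards [eventually_ge_atTop 1] with n hn
  have hnR : ((n:ℝ)) ≠ 0 := by positivity
  rw [h1 n]
  push_cast
  field_simp


theorem rotTilde_pair (hc : IsCircOrd c) (a : G) (k : ℤ) :
    rotTilde c ((a, k) : G × ℤ) = rotTilde c ((a, 0) : G × ℤ) + k := by
  simpa using rotTilde_shift hc a 0 k

theorem liftMul_pair (a b : G) (n m : ℤ) :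
    liftMul c ((a, n) : G × ℤ) ((b, m) : G × ℤ) = ((a * b : G), n + m + fc c a b) := rfl

theorem tauc_eq (hc : IsCircOrd c) (a b : G) :
    tauc c a b = rotTilde c ((a * b, 0) : G × ℤ) + fc c a b
      - rotTilde c ((a, 0) : G × ℤ) - rotTilde c ((b, 0) : G × ℤ) := by
  unfold tauc
  rw [liftMul_pair, rotTilde_pair hc]
  push_cast
  ring

theorem tau_lifts (hc : IsCircOrd c) (a b : G) (n m : ℤ) :
    rotTilde c (liftMul c ((a, n) : G × ℤ) ((b, m) : G × ℤ))
      - rotTilde c ((a, n) : G × ℤ) - rotTilde c ((b, m) : G × ℤ) = tauc c a b := by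
  rw [liftMul_pair, rotTilde_pair hc (a*b), rotTilde_pair hc a, rotTilde_pair hc b,
    tauc_eq hc]
  push_cast
  ring

theorem rotTilde_conj (hc : IsCircOrd c) (t x : G × ℤ) :
    rotTilde c (liftMul c (liftMul c t x) (liftInv c t)) = rotTilde c x := by
  refine (rotTilde_eq_of_tendsto hc ?_)
  -- the sequence for the conjugate equals u n + e n with |e n| ≤ 2
  have hpow : ∀ n : ℕ, liftPow c (liftMul c (liftMul c t x) (liftInv c t)) n
      = liftMul c (liftMul c t (liftPow c x n)) (liftInv c t) := by
    intro n
    exact liftPow_conj hc (show Lt hc from t) (show Lt hc from x) n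
  set u : ℕ → ℝ := fun n => ((liftPow c x n).2 : ℝ) with hu
  set e : ℕ → ℝ := fun n =>
    ((fc c t.1 (liftPow c x n).1 - fc c t.1 t.1⁻¹ + fc c (t.1 * (liftPow c x n).1) t.1⁻¹ : ℤ) : ℝ)
    with he
  have hseq : ∀ n : ℕ, ((liftPow c (liftMul c (liftMul c t x) (liftInv c t)) n).2 : ℝ)
      = u n + e n := by
    intro n
    rw [hpow n]
    show ((t.2 + (liftPow c x n).2 + fc c t.1 (liftPow c x n).1
      + (-t.2 - fc c t.1 t.1⁻¹)
      + fc c (t.1 * (liftPow c x n).1) t.1⁻¹ : ℤ) : ℝ) = u n + e n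
    simp only [hu, he]
    push_cast
    ring
  have hebd : ∀ n : ℕ, |e n| ≤ 2 := by
    intro n
    have h1 := fc_nonneg (c := c) t.1 (liftPow c x n).1
    have h2 := fc_le_one (c := c) t.1 (liftPow c x n).1
    have h3 := fc_nonneg (c := c) t.1 t.1⁻¹
    have h4 := fc_le_one (c := c) t.1 t.1⁻¹
    have h5 := fc_nonneg (c := c) (t.1 * (liftPow c x n).1) t.1⁻¹
    have h6 := fc_le_one (c := c) (t.1 * (liftPow c x n).1) t.1⁻¹
    show |((fc c t.1 (liftPow c x n).1 - fc c t.1 t.1⁻¹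
        + fc c (t.1 * (liftPow c x n).1) t.1⁻¹ : ℤ) : ℝ)| ≤ 2
    have hZ : |(fc c t.1 (liftPow c x n).1 - fc c t.1 t.1⁻¹
        + fc c (t.1 * (liftPow c x n).1) t.1⁻¹ : ℤ)| ≤ 2 := by
      rw [abs_le]; omega
    exact_mod_cast hZ
  have hezero : Filter.Tendsto (fun n : ℕ => e n / n) atTop (𝓝 0) := by
    refine squeeze_zero_norm (fun n => ?_) (tendsto_const_div_atTop_nhds_zero_nat 2)
    rcases Nat.eq_zero_or_pos n with rfl | hn
    · simp
    · have hnR : (0:ℝ) < n := by exact_mod_cast hn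
      rw [Real.norm_eq_abs, abs_div, abs_of_pos hnR]
      exact div_le_div_of_nonneg_right (hebd n) hnR.le
  have := (rotTilde_tendsto hc x).add hezero
  rw [add_zero] at this
  refine this.congr fun n => ?_
  rw [hseq n]
  ring


/-- conjugation invariance of rot, at the level of group elements. -/
theorem rotTilde_conj_elem (hc : IsCircOrd c) (g a : G) :
    ∃ m : ℤ, rotTilde c ((g * a * g⁻¹, 0) : G × ℤ) = rotTilde c ((a, 0) : G × ℤ) - m := by
  set p : G × ℤ := liftMul c (liftMul c ((g, 0) : G × ℤ) ((a, 0) : G × ℤ))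
      (liftInv c ((g, 0) : G × ℤ)) with hp
  have hfst : p.1 = g * a * g⁻¹ := rfl
  refine ⟨p.2, ?_⟩
  have h1 : rotTilde c p = rotTilde c ((a, 0) : G × ℤ) := rotTilde_conj hc _ _
  have h2 : rotTilde c p = rotTilde c ((g * a * g⁻¹, 0) : G × ℤ) + p.2 := by
    conv_lhs => rw [show p = ((g * a * g⁻¹ : G), p.2) from Prod.ext hfst rfl]
    exact rotTilde_pair hc _ _
  rw [← h1, h2]
  ring

theorem tauc_conj_elem (hc : IsCircOrd c) (g a b : G) :
    tauc c (g * a * g⁻¹) (g * b * g⁻¹) = tauc c a b := by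
  classical
  set t : Lt hc := ((g, 0) : G × ℤ) with ht
  set xa : Lt hc := ((a, 0) : G × ℤ) with hxa
  set xb : Lt hc := ((b, 0) : G × ℤ) with hxb
  set p : Lt hc := t * xa * t⁻¹ with hpdef
  set q : Lt hc := t * xb * t⁻¹ with hqdef
  have hpc : (p : G × ℤ) = liftMul c (liftMul c ((g,0) : G × ℤ) ((a,0) : G × ℤ)) (liftInv c ((g,0) : G × ℤ)) := rfl
  have hqc : (q : G × ℤ) = liftMul c (liftMul c ((g,0) : G × ℤ) ((b,0) : G × ℤ)) (liftInv c ((g,0) : G × ℤ)) := rfl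
  have hp1 : (p : G × ℤ).1 = g * a * g⁻¹ := rfl
  have hq1 : (q : G × ℤ).1 = g * b * g⁻¹ := rfl
  -- p * q = t * (xa * xb) * t⁻¹
  have hmul : p * q = t * (xa * xb) * t⁻¹ := by
    rw [hpdef, hqdef]
    group
  have h1 : rotTilde c (liftMul c (p : G × ℤ) (q : G × ℤ))
      = rotTilde c (liftMul c ((a,0) : G × ℤ) ((b,0) : G × ℤ)) := by
    have : liftMul c (p : G × ℤ) (q : G × ℤ)
        = liftMul c (liftMul c ((g,0) : G × ℤ) (liftMul c ((a,0) : G × ℤ) ((b,0) : G × ℤ)))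
          (liftInv c ((g,0) : G × ℤ)) := hmul
    rw [this]
    exact rotTilde_conj hc _ _
  have h2 : rotTilde c (p : G × ℤ) = rotTilde c ((a,0) : G × ℤ) := by
    rw [hpc]; exact rotTilde_conj hc _ _
  have h3 : rotTilde c (q : G × ℤ) = rotTilde c ((b,0) : G × ℤ) := by
    rw [hqc]; exact rotTilde_conj hc _ _
  have h4 := tau_lifts hc (g * a * g⁻¹) (g * b * g⁻¹) (p : G × ℤ).2 (q : G × ℤ).2
  have hpe : ((g * a * g⁻¹, (p : G × ℤ).2) : G × ℤ) = (p : G × ℤ) := Prod.ext hp1.symm rfl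
  have hqe : ((g * b * g⁻¹, (q : G × ℤ).2) : G × ℤ) = (q : G × ℤ) := Prod.ext hq1.symm rfl
  rw [hpe, hqe, h1, h2, h3] at h4
  rw [← h4]
  show rotTilde c (liftMul c ((a,0) : G × ℤ) ((b,0) : G × ℤ))
      - rotTilde c ((a,0) : G × ℤ) - rotTilde c ((b,0) : G × ℤ) = tauc c a b
  rfl

/-- The right-conjugated circular order. -/
def conjOrd (d : G → G → G → ℤ) (g : G) : G → G → G → ℤ :=
  fun a b c' => d (a * g⁻¹) (b * g⁻¹) (c' * g⁻¹)

theorem conjOrd_isCircOrd {d : G → G → G → ℤ} (hd : IsCircOrd d) (g : G) :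
    IsCircOrd (conjOrd d g) := by
  refine ⟨fun a b c' => ?_, fun a b c' => hd.2.1 _ _ _, fun a b c' e => hd.2.2.1 _ _ _ _,
    fun h a b c' => ?_⟩
  · rw [show conjOrd d g a b c' = d (a*g⁻¹) (b*g⁻¹) (c'*g⁻¹) from rfl, hd.1]
    simp [mul_left_inj]
  · show d (h*a*g⁻¹) (h*b*g⁻¹) (h*c'*g⁻¹) = d (a*g⁻¹) (b*g⁻¹) (c'*g⁻¹)
    rw [← hd.2.2.2 h (a*g⁻¹) (b*g⁻¹) (c'*g⁻¹), mul_assoc, mul_assoc, mul_assoc]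

theorem fc_conjOrd {d : G → G → G → ℤ} (hd : IsCircOrd d) (g x y : G) :
    fc (conjOrd d g) x y = fc d (g*x*g⁻¹) (g*y*g⁻¹) := by
  have harg1 : g * (1 * g⁻¹) = 1 := by group
  have harg2 : g * (x * g⁻¹) = g*x*g⁻¹ := by group
  have harg3 : g * (x * y * g⁻¹) = (g*x*g⁻¹) * (g*y*g⁻¹) := by group
  have e : conjOrd d g 1 x (x*y) = d 1 (g*x*g⁻¹) ((g*x*g⁻¹)*(g*y*g⁻¹)) := by
    have h := hd.2.2.2 g (1 * g⁻¹) (x * g⁻¹) (x * y * g⁻¹)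
    rw [harg1, harg2, harg3] at h
    exact h.symm
  classical
  rw [fc, fc, e]
  refine if_congr (or_congr ?_ (or_congr ?_ Iff.rfl)) rfl rfl
  · exact (conj_eq_one_iff (a := g) (b := x)).symm
  · exact (conj_eq_one_iff (a := g) (b := y)).symm

theorem liftPow_conjOrd {d : G → G → G → ℤ} (hd : IsCircOrd d) (g a : G) (z : ℤ) (n : ℕ) :
    liftPow (conjOrd d g) ((a, z) : G × ℤ) n
      = ((a ^ n : G), (liftPow d ((g*a*g⁻¹, z) : G × ℤ) n).2) := by
  induction n with
  | zero => simp [liftPow]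
  | succ n ih =>
    show liftMul (conjOrd d g) (liftPow (conjOrd d g) ((a, z) : G × ℤ) n) ((a, z) : G × ℤ) = _
    rw [ih]
    refine Prod.ext ?_ ?_
    · show a ^ n * a = a ^ (n+1)
      rw [pow_succ]
    · show (liftPow d ((g*a*g⁻¹, z) : G × ℤ) n).2 + z + fc (conjOrd d g) (a ^ n) a
        = (liftPow d ((g*a*g⁻¹, z) : G × ℤ) n).2 + z
          + fc d ((liftPow d ((g*a*g⁻¹, z) : G × ℤ) n).1) (g*a*g⁻¹)
      rw [fc_conjOrd hd, liftPow_fst]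
      congr 2
      exact conj_pow.symm

theorem rotTilde_conjOrd {d : G → G → G → ℤ} (hd : IsCircOrd d) (g a : G) (z : ℤ) :
    rotTilde (conjOrd d g) ((a, z) : G × ℤ) = rotTilde d ((g*a*g⁻¹, z) : G × ℤ) := by
  unfold rotTilde
  congr 1
  funext n
  rw [show liftFloor (liftPow (conjOrd d g) ((a, z) : G × ℤ) n)
      = (liftPow (conjOrd d g) ((a, z) : G × ℤ) n).2 from rfl, liftPow_conjOrd hd]
  rfl

theorem rotc_conjOrd {d : G → G → G → ℤ} (hd : IsCircOrd d) (g a : G) :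
    rotc (conjOrd d g) a = rotc d a := by
  obtain ⟨m, hm⟩ := rotTilde_conj_elem hd g a
  show ((rotTilde (conjOrd d g) ((a,0) : G × ℤ) : ℝ) : AddCircle (1:ℝ)) = _
  rw [rotTilde_conjOrd hd, hm]
  have h : (((-m : ℝ)) : AddCircle (1:ℝ)) = 0 := by
    rw [AddCircle.coe_eq_zero_iff]
    exact ⟨-m, by simp⟩
  show ((rotTilde d ((a,0) : G × ℤ) - m : ℝ) : AddCircle (1:ℝ)) = _
  rw [sub_eq_add_neg, AddCircle.coe_add, h, add_zero]
  rfl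

theorem tauc_conjOrd {d : G → G → G → ℤ} (hd : IsCircOrd d) (g a b : G) :
    tauc (conjOrd d g) a b = tauc d a b := by
  have hcirc := conjOrd_isCircOrd hd g
  rw [tauc_eq hcirc, fc_conjOrd hd, rotTilde_conjOrd hd, rotTilde_conjOrd hd,
    rotTilde_conjOrd hd]
  have hab : g * (a * b) * g⁻¹ = (g*a*g⁻¹) * (g*b*g⁻¹) := by group
  rw [hab, ← tauc_eq hd (g*a*g⁻¹) (g*b*g⁻¹)]
  exact tauc_conj_elem hd g a b


section Topology

theorem eval_continuous' (g1 g2 g3 : G) :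
    Continuous (fun f : G → G → G → ℤ => f g1 g2 g3) :=
  (continuous_apply g3).comp ((continuous_apply g2).comp (continuous_apply g1))

theorem eval_continuous (g1 g2 g3 : G) :
    Continuous (fun d : CircOrd G => d.1 g1 g2 g3) :=
  (eval_continuous' g1 g2 g3).comp continuous_subtype_val

open Classical in
theorem continuous_fc (u v : G) : Continuous fun d : CircOrd G => fc d.1 u v := by
  have h : (fun d : CircOrd G => fc d.1 u v)
      = (fun t : ℤ => if u = 1 ∨ v = 1 ∨ t = 1 then (0:ℤ) else 1)
        ∘ (fun d : CircOrd G => d.1 1 u (u*v)) := by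
    funext d; rfl
  rw [h]
  exact continuous_of_discreteTopology.comp (eval_continuous 1 u (u*v))

theorem continuous_liftPow_snd (x : G × ℤ) (n : ℕ) :
    Continuous fun d : CircOrd G => (liftPow d.1 x n).2 := by
  induction n with
  | zero => exact continuous_const
  | succ n ih =>
    have h : (fun d : CircOrd G => (liftPow d.1 x (n+1)).2)
        = fun d : CircOrd G => (liftPow d.1 x n).2 + x.2 + fc d.1 (x.1 ^ n) x.1 := by
      funext d
      show (liftPow d.1 x n).2 + x.2 + fc d.1 ((liftPow d.1 x n).1) x.1 = _
      rw [liftPow_fst]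
    rw [h]
    exact (ih.add continuous_const).add (continuous_fc _ _)

open Filter in
theorem continuous_rotTilde (x : G × ℤ) :
    Continuous fun d : CircOrd G => rotTilde d.1 x := by
  have hF : ∀ n : ℕ, Continuous fun d : CircOrd G => ((liftPow d.1 x n).2 : ℝ) / (n:ℝ) :=
    fun n => (continuous_of_discreteTopology.comp (continuous_liftPow_snd x n)).div_const _
  have hTU : TendstoUniformly (fun (n : ℕ) (d : CircOrd G) => ((liftPow d.1 x n).2 : ℝ)/(n:ℝ))
      (fun d : CircOrd G => rotTilde d.1 x) atTop := by
    rw [Metric.tendstoUniformly_iff]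
    intro ε hε
    obtain ⟨N, hN⟩ := exists_nat_gt (1/ε)
    filter_upwards [eventually_ge_atTop (max N 1)] with n hn d
    have hn1 : 1 ≤ n := le_trans (le_max_right _ _) hn
    have hnN : (N:ℝ) ≤ n := by exact_mod_cast le_trans (le_max_left _ _) hn
    have hnpos : (0:ℝ) < n := by
      have : (1:ℝ) ≤ n := by exact_mod_cast hn1
      linarith
    obtain ⟨hl, hr⟩ := rotTilde_bounds d.2 x hn1
    have hinv : (1:ℝ)/n < ε := by
      rw [div_lt_iff₀ hnpos]
      have h1 : 1/ε < (n:ℝ) := lt_of_lt_of_le hN hnN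
      rw [div_lt_iff₀ hε] at h1
      linarith
    rw [Real.dist_eq, abs_lt]
    have hsplit : (((liftPow d.1 x n).2 : ℝ) + 1) / n
        = ((liftPow d.1 x n).2 : ℝ)/n + 1/n := add_div _ _ _
    constructor <;> [skip; skip]
    · have := hl
      linarith
    · rw [hsplit] at hr
      linarith
  exact hTU.continuous (Eventually.of_forall hF).frequently

theorem isCompact_circOrdSet : IsCompact {f : G → G → G → ℤ | IsCircOrd f} := by
  classical
  have h3 : IsCompact ({0,1,-1} : Set ℤ) := (Set.toFinite _).isCompact
  have h1 : IsCompact (Set.pi Set.univ fun _ : G =>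
      Set.pi Set.univ fun _ : G => Set.pi Set.univ fun _ : G => ({0,1,-1} : Set ℤ)) :=
    isCompact_univ_pi fun _ => isCompact_univ_pi fun _ => isCompact_univ_pi fun _ => h3
  refine h1.of_isClosed_subset ?_ ?_
  · -- closedness
    have hdecomp : {f : G → G → G → ℤ | IsCircOrd f}
        = (⋂ (a : G) (b : G) (c' : G),
              {f : G → G → G → ℤ | f a b c' = 0 ↔ (a = b ∨ a = c' ∨ b = c')}) ∩
          ((⋂ (a : G) (b : G) (c' : G),
              {f : G → G → G → ℤ | f a b c' = 0 ∨ f a b c' = 1 ∨ f a b c' = -1}) ∩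
           ((⋂ (a : G) (b : G) (c' : G) (e : G),
              {f : G → G → G → ℤ | f b c' e - f a c' e + f a b e - f a b c' = 0}) ∩
            (⋂ (g : G) (a : G) (b : G) (c' : G),
              {f : G → G → G → ℤ | f (g*a) (g*b) (g*c') = f a b c'}))) := by
      ext f
      simp only [Set.mem_setOf_eq, Set.mem_inter_iff, Set.mem_iInter, IsCircOrd]
    rw [hdecomp]
    refine IsClosed.inter ?_ (IsClosed.inter ?_ (IsClosed.inter ?_ ?_))
    · refine isClosed_iInter fun a => isClosed_iInter fun b => isClosed_iInter fun c' => ?_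
      rcases em (a = b ∨ a = c' ∨ b = c') with hP | hP
      · have he : {f : G → G → G → ℤ | f a b c' = 0 ↔ (a = b ∨ a = c' ∨ b = c')}
            = (fun f : G → G → G → ℤ => f a b c') ⁻¹' {0} := by
          ext f; simp [hP]
        rw [he]
        exact isClosed_singleton.preimage (eval_continuous' a b c')
      · have he : {f : G → G → G → ℤ | f a b c' = 0 ↔ (a = b ∨ a = c' ∨ b = c')}
            = (fun f : G → G → G → ℤ => f a b c') ⁻¹' ({0}ᶜ) := by
          ext f; simp [hP]
        rw [he]
        exact (isClosed_compl_iff.mpr (isOpen_discrete _)).preimage (eval_continuous' a b c')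
    · refine isClosed_iInter fun a => isClosed_iInter fun b => isClosed_iInter fun c' => ?_
      have he : {f : G → G → G → ℤ | f a b c' = 0 ∨ f a b c' = 1 ∨ f a b c' = -1}
          = (fun f : G → G → G → ℤ => f a b c') ⁻¹' ({0,1,-1} : Set ℤ) := by
        ext f; simp
      rw [he]
      exact ((Set.toFinite ({0,1,-1} : Set ℤ)).isClosed).preimage (eval_continuous' a b c')
    · refine isClosed_iInter fun a => isClosed_iInter fun b => isClosed_iInter fun c' =>
        isClosed_iInter fun e => ?_
      exact isClosed_eq ((((eval_continuous' b c' e).sub (eval_continuous' a c' e)).add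
        (eval_continuous' a b e)).sub (eval_continuous' a b c')) continuous_const
    · refine isClosed_iInter fun g => isClosed_iInter fun a => isClosed_iInter fun b =>
        isClosed_iInter fun c' => ?_
      exact isClosed_eq (eval_continuous' _ _ _) (eval_continuous' _ _ _)
  · intro f hf
    rw [Set.mem_univ_pi]
    intro a
    rw [Set.mem_univ_pi]
    intro b
    rw [Set.mem_univ_pi]
    intro c'
    exact hf.2.1 a b c'

theorem continuous_rotc (a : G) : Continuous fun d : CircOrd G => rotc d.1 a := by
  exact (AddCircle.continuous_mk' 1).comp (continuous_rotTilde ((a, 0) : G × ℤ))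

theorem continuous_tauc (a b : G) : Continuous fun d : CircOrd G => tauc d.1 a b := by
  have h : (fun d : CircOrd G => tauc d.1 a b)
      = fun d : CircOrd G => rotTilde d.1 ((a * b, 0) : G × ℤ) + (fc d.1 a b : ℝ)
        - rotTilde d.1 ((a, 0) : G × ℤ) - rotTilde d.1 ((b, 0) : G × ℤ) := by
    funext d
    exact tauc_eq d.2 a b
  rw [h]
  exact (((continuous_rotTilde _).add
    (continuous_of_discreteTopology.comp (continuous_fc a b))).sub
    (continuous_rotTilde _)).sub (continuous_rotTilde _)

end Topology


end Aux

/-- Proposition 4.15: the semiconjugacy class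
`S_c = {d ∈ CO(G) : rot_d = rot_c and τ_d = τ_c}` is a compact subset of `CO(G)` and is
invariant under the right conjugation action `(d·g)(g₁,g₂,g₃) = d(g₁g⁻¹,g₂g⁻¹,g₃g⁻¹)`. -/
theorem stmt8 (c : G → G → G → ℤ) (hc : IsCircOrd c)
    (S : Set (CircOrd G))
    (hSdef : S = {d : CircOrd G |
      (∀ g : G, rotc d.1 g = rotc c g) ∧ (∀ g h : G, tauc d.1 g h = tauc c g h)}) :
    IsCompact S ∧
    ∀ d ∈ S, ∀ g : G,
      ∃ hcirc : IsCircOrd (fun g₁ g₂ g₃ : G => d.1 (g₁ * g⁻¹) (g₂ * g⁻¹) (g₃ * g⁻¹)),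
        (⟨fun g₁ g₂ g₃ : G => d.1 (g₁ * g⁻¹) (g₂ * g⁻¹) (g₃ * g⁻¹), hcirc⟩ : CircOrd G) ∈ S := by
  constructor
  · haveI : CompactSpace (CircOrd G) := isCompact_iff_compactSpace.mp isCompact_circOrdSet
    refine IsClosed.isCompact ?_
    rw [hSdef]
    have hdec : {d : CircOrd G | (∀ g : G, rotc d.1 g = rotc c g) ∧
          (∀ g h : G, tauc d.1 g h = tauc c g h)}
        = (⋂ g : G, {d : CircOrd G | rotc d.1 g = rotc c g}) ∩
          (⋂ (g : G) (h : G), {d : CircOrd G | tauc d.1 g h = tauc c g h}) := by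
      ext d
      simp only [Set.mem_setOf_eq, Set.mem_inter_iff, Set.mem_iInter]
    rw [hdec]
    exact (isClosed_iInter fun g => isClosed_eq (continuous_rotc g) continuous_const).inter
      (isClosed_iInter fun g => isClosed_iInter fun h =>
        isClosed_eq (continuous_tauc g h) continuous_const)
  · intro d hd g
    refine ⟨conjOrd_isCircOrd d.2 g, ?_⟩
    rw [hSdef] at hd ⊢
    obtain ⟨hrot, htau⟩ := hd
    refine ⟨fun a => ?_, fun a b => ?_⟩
    · exact (rotc_conjOrd d.2 g a).trans (hrot a)
    · exact (tauc_conjOrd d.2 g a b).trans (htau a b)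

end Paper
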